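/- arXiv:2503.12283 — 2 statements merged into one kernel-verified Lean document; each statement's English description precedes it below -/
import Mathlib

section
/- Define G: Ξ → Θ by G(ξ)((s,a),(s',a')) = (Σ_{s̃} ξ(s',a',s̃) / Σ_{s̃,ã} ξ(s',ã,s̃))·ξ(s,a,s') when Σ_{s̃} ξ(s',a',s̃) > 0, and G(ξ)((s,a),(s',a')) = 0 otherwise. Then G is well-defined (i.e. G(ξ) ∈ Θ for every ξ ∈ Ξ), and D_mc(G(ξ')‖G(ξ)) = D_mdp(ξ'‖ξ) for all ξ' ∈ Ξ and ξ ∈ Ξ0. -/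
open Filter Topology MeasureTheory
open scoped Classical

namespace OfflineRL

variable (S A : Type*) [Fintype S] [Fintype A] [DecidableEq S] [DecidableEq A]

/-- Stationary policies `Π`. -/
def policySet : Set (S → A → ℝ) :=
  {π | ∀ s, (∀ a, 0 ≤ π s a) ∧ ∑ a, π s a = 1}

/-- Exploratory (everywhere positive) policies `Π₀`. -/
def policyPos : Set (S → A → ℝ) :=
  {π | π ∈ policySet S A ∧ ∀ s a, 0 < π s a}

/-- Policies `Π_ε`. -/
def policyEps (ε : ℝ) : Set (S → A → ℝ) :=
  {π | π ∈ policySet S A ∧ ∀ s a, ε ≤ π s a}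

/-- Transition kernels `𝒬`. -/
def kernelSet : Set (S → A → S → ℝ) :=
  {Q | ∀ s a, (∀ s', 0 ≤ Q s a s') ∧ ∑ s', Q s a s' = 1}

/-- Kernels whose associated directed graph on `S × A` is strongly connected, `𝒬₀`. -/
def kernel0 : Set (S → A → S → ℝ) :=
  {Q | Q ∈ kernelSet S A ∧
    ∀ x y : S × A, Relation.ReflTransGen (fun u v : S × A => 0 < Q u.1 u.2 v.1) x y}

/-- Probability simplex over the states. -/
def stateSimplex : Set (S → ℝ) := {p | (∀ s, 0 ≤ p s) ∧ ∑ s, p s = 1}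

/-- `Ξ`: state-action-next-state distributions with balanced marginals. -/
def XiSet : Set (S × A × S → ℝ) :=
  {ξ | (∀ z, 0 ≤ ξ z) ∧ (∑ z, ξ z = 1) ∧
    ∀ s : S, (∑ s' : S, ∑ a : A, ξ (s, a, s')) = ∑ s' : S, ∑ a : A, ξ (s', a, s)}

/-- `Ξ₀`: elements of `Ξ` with strongly connected support graph. -/
def Xi0Set : Set (S × A × S → ℝ) :=
  {ξ | ξ ∈ XiSet S A ∧
    ∀ x y : S × A, Relation.ReflTransGen (fun u v : S × A => 0 < ξ (u.1, u.2, v.1)) x y}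

/-- Stationary state-action distribution `μ(s,a) = Σ_{s'} ξ(s,a,s')`. -/
noncomputable def muXi (ξ : S × A × S → ℝ) (x : S × A) : ℝ := ∑ s', ξ (x.1, x.2, s')

/-- Transition kernel `Q(s'|s,a)` determined by `ξ`. -/
noncomputable def QXi (ξ : S × A × S → ℝ) (s : S) (a : A) (s' : S) : ℝ :=
  ξ (s, a, s') / muXi S A ξ (s, a)

/-- Behavioral policy `π(a'|s')` determined by `ξ`. -/
noncomputable def piXi (ξ : S × A × S → ℝ) (s' : S) (a' : A) : ℝ :=
  muXi S A ξ (s', a') / ∑ a, muXi S A ξ (s', a)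

/-- Transition matrix of the state-action chain of `ξ`. -/
noncomputable def Pmat (ξ : S × A × S → ℝ) (x x' : S × A) : ℝ :=
  piXi S A ξ x'.1 x'.2 * QXi S A ξ x.1 x.2 x'.1

/-- Probability of a finite state-action trajectory under `ℙ_ξ` with initial distribution `η`. -/
noncomputable def trajP (ξ : S × A × S → ℝ) (η : S → ℝ) (T : ℕ) (xs : Fin T → S × A) : ℝ :=
  ∏ t : Fin T,
    if (t : ℕ) = 0 then η (xs t).1 * piXi S A ξ (xs t).1 (xs t).2
    else Pmat S A ξ (xs ⟨(t : ℕ) - 1, Nat.lt_of_le_of_lt (Nat.sub_le _ _) t.isLt⟩) (xs t)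

/-- Empirical state-action-next-state distribution (with the ghost transition from
`(S_T, A_T)` to `S_1`, which makes it cyclic). -/
noncomputable def empXi (T : ℕ) (xs : Fin T → S × A) : S × A × S → ℝ := fun z =>
  ((Finset.univ.filter fun t : Fin T =>
      xs t = (z.1, z.2.1) ∧
      (xs ⟨((t : ℕ) + 1) % T,
        Nat.mod_lt _ (Nat.lt_of_le_of_lt (Nat.zero_le _) t.isLt)⟩).1 = z.2.2).card : ℝ) / T

/-- `ℙ_ξ(ξ̂_T ∈ 𝒟)`. -/
noncomputable def probXi (ξ : S × A × S → ℝ) (η : S → ℝ) (𝒟 : Set (S × A × S → ℝ))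
    (T : ℕ) : ℝ :=
  ∑ xs : Fin T → S × A, 𝒟.indicator (fun _ => trajP S A ξ η T xs) (empXi S A T xs)

/-- Extended-real logarithm: `elog x = log x` for `x > 0` and `⊥` otherwise. -/
noncomputable def elog (x : ℝ) : EReal := if x ≤ 0 then ⊥ else ((Real.log x : ℝ) : EReal)

/-- Marginal state distribution `μ_S(s)`. -/
noncomputable def rowXi (ξ : S × A × S → ℝ) (s : S) : ℝ := ∑ a, ∑ s', ξ (s, a, s')

/-- Conditional relative entropy for MDPs, with the conventions `0·log(0/t) = 0` and
`t·log(t/0) = ∞` for `t > 0`. -/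
noncomputable def Dmdp (ξ' ξ : S × A × S → ℝ) : EReal :=
  ∑ z : S × A × S,
    if ξ' z = 0 then (0 : EReal)
    else if ξ z = 0 then (⊤ : EReal)
    else (((ξ' z * (Real.log (ξ' z / rowXi S A ξ' z.1) -
      Real.log (ξ z / rowXi S A ξ z.1))) : ℝ) : EReal)

/-- Long-run average reward. -/
def V (r : S → A → ℝ) (ξ : S × A × S → ℝ) : ℝ := ∑ z : S × A × S, r z.1 z.2.1 * ξ z

/-- `ξ` is the stationary state-action-next-state distribution induced by the pair
`(π, Q)` where `Q` is the kernel determined by `ξ0`. -/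
def IsShift (π : S → A → ℝ) (ξ0 ξ : S × A × S → ℝ) : Prop :=
  ∃ μ : S × A → ℝ, (∀ x, 0 ≤ μ x) ∧ (∑ x, μ x = 1) ∧
    (∀ x' : S × A, μ x' = ∑ x : S × A, μ x * (π x'.1 x'.2 * QXi S A ξ0 x.1 x.2 x'.1)) ∧
    (∀ s a s', ξ (s, a, s') = QXi S A ξ0 s a s' * μ (s, a))

/-- The distributionally robust value function `V^π_ρ(ξ')`, where `f = f_π` is the
distribution shift function of the evaluation policy. -/
noncomputable def Vrho (r : S → A → ℝ) (f : (S × A × S → ℝ) → (S × A × S → ℝ)) (ρ : ℝ)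
    (ξ' : S × A × S → ℝ) : ℝ :=
  sInf ((fun ξ0 => V S A r (f ξ0)) '' {ξ0 | ξ0 ∈ Xi0Set S A ∧ Dmdp S A ξ' ξ0 ≤ (ρ : EReal)})


/-- `Θ`: doublet distributions on `𝒳 × 𝒳` (with `𝒳 = S × A`) with balanced marginals. -/
def ThetaSet : Set ((S × A) × (S × A) → ℝ) :=
  {p | (∀ z, 0 ≤ p z) ∧ (∑ z, p z = 1) ∧
    ∀ y : S × A, ∑ x : S × A, p (x, y) = ∑ x : S × A, p (y, x)}

/-- Conditional relative entropy for Markov chains on `𝒳 = S × A`, with the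
conventions `0·log(0/t) = 0` and `t·log(t/0) = ∞` for `t > 0`. -/
noncomputable def Dmc (θ' θ : (S × A) × (S × A) → ℝ) : EReal :=
  ∑ z : (S × A) × (S × A),
    if θ' z = 0 then (0 : EReal)
    else if θ z = 0 then (⊤ : EReal)
    else (((θ' z * (Real.log (θ' z / ∑ w, θ' (z.1, w)) -
      Real.log (θ z / ∑ w, θ (z.1, w)))) : ℝ) : EReal)

/-- The map `G : Ξ → Θ` of Proposition 2. -/
noncomputable def GXi (ξ : S × A × S → ℝ) : (S × A) × (S × A) → ℝ := fun z =>
  if 0 < ∑ st : S, ξ (z.2.1, z.2.2, st)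
  then ((∑ st : S, ξ (z.2.1, z.2.2, st)) / (∑ at' : A, ∑ st : S, ξ (z.2.1, at', st)))
        * ξ (z.1.1, z.1.2, z.2.1)
  else 0
set_option linter.unusedSectionVars false

lemma rowXi_eq_sum_mu (ξ : S × A × S → ℝ) (s : S) :
    rowXi S A ξ s = ∑ a, muXi S A ξ (s, a) := rfl

lemma GXi_apply (ξ : S × A × S → ℝ) (x y : S × A) :
    GXi S A ξ (x, y) =
      if 0 < muXi S A ξ y then muXi S A ξ y / rowXi S A ξ y.1 * ξ (x.1, x.2, y.1) else 0 := rfl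

lemma mu_nonneg (ξ : S × A × S → ℝ) (h0 : ∀ z, 0 ≤ ξ z) (x : S × A) :
    0 ≤ muXi S A ξ x :=
  Finset.sum_nonneg fun _ _ => h0 _

lemma row_nonneg (ξ : S × A × S → ℝ) (h0 : ∀ z, 0 ≤ ξ z) (s : S) :
    0 ≤ rowXi S A ξ s := by
  rw [rowXi_eq_sum_mu]
  exact Finset.sum_nonneg fun a _ => mu_nonneg S A ξ h0 _

lemma xi_le_mu (ξ : S × A × S → ℝ) (h0 : ∀ z, 0 ≤ ξ z) (s : S) (a : A) (s' : S) :
    ξ (s, a, s') ≤ muXi S A ξ (s, a) :=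
  Finset.single_le_sum (f := fun t => ξ (s, a, t)) (fun t _ => h0 (s, a, t)) (Finset.mem_univ s')

lemma mu_le_row (ξ : S × A × S → ℝ) (h0 : ∀ z, 0 ≤ ξ z) (s : S) (a : A) :
    muXi S A ξ (s, a) ≤ rowXi S A ξ s := by
  rw [rowXi_eq_sum_mu]
  exact Finset.single_le_sum (fun b _ => mu_nonneg S A ξ h0 _) (Finset.mem_univ a)

lemma colsum_eq_row (ξ : S × A × S → ℝ) (hξ : ξ ∈ XiSet S A) (s : S) :
    (∑ s' : S, ∑ a : A, ξ (s', a, s)) = rowXi S A ξ s := by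
  rw [← hξ.2.2 s, rowXi, Finset.sum_comm]

lemma xi_le_col (ξ : S × A × S → ℝ) (hξ : ξ ∈ XiSet S A) (s : S) (a : A) (s' : S) :
    ξ (s, a, s') ≤ rowXi S A ξ s' := by
  rw [← colsum_eq_row S A ξ hξ s']
  have h1 : ξ (s, a, s') ≤ ∑ b : A, ξ (s, b, s') :=
    Finset.single_le_sum (f := fun b => ξ (s, b, s')) (fun b _ => hξ.1 _) (Finset.mem_univ a)
  have h2 : (∑ b : A, ξ (s, b, s')) ≤ ∑ t : S, ∑ b : A, ξ (t, b, s') :=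
    Finset.single_le_sum (f := fun t => ∑ b : A, ξ (t, b, s'))
      (fun t _ => Finset.sum_nonneg fun b _ => hξ.1 _) (Finset.mem_univ s)
  exact h1.trans h2

lemma sum_G_fiber (ξ : S × A × S → ℝ) (hξ : ξ ∈ XiSet S A) (s : S) (a : A) (s' : S) :
    ∑ a' : A, GXi S A ξ ((s, a), (s', a')) = ξ (s, a, s') := by
  simp only [GXi_apply]
  by_cases hrow : rowXi S A ξ s' = 0
  · have hmu : ∀ a', muXi S A ξ (s', a') = 0 := fun a' =>
      le_antisymm (hrow ▸ mu_le_row S A ξ hξ.1 s' a') (mu_nonneg S A ξ hξ.1 _)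
    have hx : ξ (s, a, s') = 0 :=
      le_antisymm (hrow ▸ xi_le_col S A ξ hξ s a s') (hξ.1 _)
    simp [hmu, hx]
  · have hterm : ∀ a' : A,
        (if 0 < muXi S A ξ (s', a')
          then muXi S A ξ (s', a') / rowXi S A ξ s' * ξ (s, a, s') else 0)
        = muXi S A ξ (s', a') / rowXi S A ξ s' * ξ (s, a, s') := by
      intro a'
      split_ifs with h
      · rfl
      · have : muXi S A ξ (s', a') = 0 :=
          le_antisymm (not_lt.1 h) (mu_nonneg S A ξ hξ.1 _)
        rw [this, zero_div, zero_mul]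
    rw [Finset.sum_congr rfl fun a' _ => hterm a', ← Finset.sum_mul, ← Finset.sum_div,
      ← rowXi_eq_sum_mu, div_self hrow, one_mul]

lemma sum_G_row (ξ : S × A × S → ℝ) (hξ : ξ ∈ XiSet S A) (x : S × A) :
    ∑ w : S × A, GXi S A ξ (x, w) = muXi S A ξ x := by
  obtain ⟨s, a⟩ := x
  rw [Fintype.sum_prod_type]
  simp only [sum_G_fiber S A ξ hξ s a]
  rfl

lemma sum_G_col (ξ : S × A × S → ℝ) (hξ : ξ ∈ XiSet S A) (y : S × A) :
    ∑ x : S × A, GXi S A ξ (x, y) = muXi S A ξ y := by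
  simp only [GXi_apply]
  by_cases hmu : 0 < muXi S A ξ y
  · simp only [if_pos hmu]
    rw [← Finset.mul_sum]
    have hc : (∑ x : S × A, ξ (x.1, x.2, y.1)) = rowXi S A ξ y.1 := by
      rw [Fintype.sum_prod_type]
      exact colsum_eq_row S A ξ hξ y.1
    have hrow : rowXi S A ξ y.1 ≠ 0 :=
      (lt_of_lt_of_le hmu (by
        have := mu_le_row S A ξ hξ.1 y.1 y.2
        simpa using this)).ne'
    rw [hc, div_mul_cancel₀ _ hrow]
  · simp only [if_neg hmu, Finset.sum_const_zero]
    exact (le_antisymm (not_lt.1 hmu) (mu_nonneg S A ξ hξ.1 _)).symm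

lemma mu_pos_of_Xi0 (ξ : S × A × S → ℝ) (hξ : ξ ∈ Xi0Set S A) (x : S × A) :
    0 < muXi S A ξ x := by
  obtain ⟨hX, hconn⟩ := hξ
  have hex : ∃ z, ξ z ≠ 0 := by
    by_contra h
    push_neg at h
    have := hX.2.1
    simp [h] at this
  obtain ⟨z0, hz0⟩ := hex
  have hz0pos : 0 < ξ z0 := lt_of_le_of_ne (hX.1 z0) (Ne.symm hz0)
  rcases Relation.ReflTransGen.cases_head (hconn x (z0.1, z0.2.1)) with heq | ⟨c, hstep, -⟩
  · rw [heq]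
    have h1 : ξ (z0.1, z0.2.1, z0.2.2) ≤ muXi S A ξ (z0.1, z0.2.1) :=
      xi_le_mu S A ξ hX.1 _ _ _
    have h2 : ξ (z0.1, z0.2.1, z0.2.2) = ξ z0 := rfl
    linarith
  · have h1 : ξ (x.1, x.2, c.1) ≤ muXi S A ξ (x.1, x.2) := xi_le_mu S A ξ hX.1 _ _ _
    have h2 : muXi S A ξ (x.1, x.2) = muXi S A ξ x := rfl
    linarith

lemma nonempty_A_of_Xi (ξ : S × A × S → ℝ) (hξ : ξ ∈ XiSet S A) : Nonempty A := by
  rcases isEmpty_or_nonempty A with h | h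
  · exfalso
    have hs := hξ.2.1
    haveI : IsEmpty (S × A × S) := ⟨fun z => h.elim z.2.1⟩
    rw [Finset.univ_eq_empty, Finset.sum_empty] at hs
    exact one_ne_zero hs.symm
  · exact h

lemma row_pos_of_Xi0 (ξ : S × A × S → ℝ) (hξ : ξ ∈ Xi0Set S A) (s : S) :
    0 < rowXi S A ξ s := by
  obtain ⟨a⟩ := nonempty_A_of_Xi S A ξ hξ.1
  exact lt_of_lt_of_le (mu_pos_of_Xi0 S A ξ hξ (s, a)) (mu_le_row S A ξ hξ.1.1 s a)

lemma ereal_sum_ne_bot {ι : Type*} (s : Finset ι) (f : ι → EReal)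
    (h : ∀ i ∈ s, f i ≠ ⊥) : ∑ i ∈ s, f i ≠ ⊥ := by
  classical
  induction s using Finset.induction_on with
  | empty => simp
  | @insert a t ha ih =>
    rw [Finset.sum_insert ha]
    intro hbot
    rcases EReal.add_eq_bot_iff.mp hbot with h1 | h1
    · exact h a (Finset.mem_insert_self a t) h1
    · exact ih (fun i hi => h i (Finset.mem_insert_of_mem hi)) h1

lemma ereal_sum_eq_top {ι : Type*} [Fintype ι] (f : ι → EReal)
    (h : ∀ i, f i ≠ ⊥) (i : ι) (hfi : f i = ⊤) : ∑ j, f j = ⊤ := by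
  classical
  rw [← Finset.add_sum_erase _ f (Finset.mem_univ i), hfi]
  exact EReal.top_add_of_ne_bot (ereal_sum_ne_bot _ _ fun j _ => h j)

lemma ereal_coe_sum {ι : Type*} (s : Finset ι) (f : ι → ℝ) :
    ((∑ i ∈ s, f i : ℝ) : EReal) = ∑ i ∈ s, (f i : EReal) := by
  classical
  induction s using Finset.induction_on with
  | empty => simp
  | @insert a t ha ih => rw [Finset.sum_insert ha, Finset.sum_insert ha, EReal.coe_add, ih]

/-- Policy-ratio part of the decomposed relative entropy. -/
noncomputable def auxC (ξ' ξ : S × A × S → ℝ) (y : S × A) : ℝ :=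
  Real.log (muXi S A ξ' y / rowXi S A ξ' y.1) - Real.log (muXi S A ξ y / rowXi S A ξ y.1)

/-- Kernel-ratio part of the decomposed relative entropy. -/
noncomputable def auxB (ξ' ξ : S × A × S → ℝ) (z : S × A × S) : ℝ :=
  (Real.log (ξ' z) - Real.log (muXi S A ξ' (z.1, z.2.1))) -
  (Real.log (ξ z) - Real.log (muXi S A ξ (z.1, z.2.1)))

lemma dmdp_term (ξ' ξ : S × A × S → ℝ) (hξ' : ξ' ∈ XiSet S A) (hξ : ξ ∈ Xi0Set S A)
    (hsup : ∀ z, ξ' z ≠ 0 → ξ z ≠ 0) (z : S × A × S) :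
    ξ' z * (Real.log (ξ' z / rowXi S A ξ' z.1) - Real.log (ξ z / rowXi S A ξ z.1)) =
    ξ' z * (auxC S A ξ' ξ (z.1, z.2.1) + auxB S A ξ' ξ z) := by
  obtain ⟨s, a, s'⟩ := z
  rcases eq_or_ne (ξ' (s, a, s')) 0 with h0 | h0
  · rw [h0, zero_mul, zero_mul]
  · have hx' : 0 < ξ' (s, a, s') := lt_of_le_of_ne (hξ'.1 _) (Ne.symm h0)
    have hmu' : 0 < muXi S A ξ' (s, a) := lt_of_lt_of_le hx' (xi_le_mu S A ξ' hξ'.1 s a s')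
    have hrow' : 0 < rowXi S A ξ' s := lt_of_lt_of_le hmu' (mu_le_row S A ξ' hξ'.1 s a)
    have hx : ξ (s, a, s') ≠ 0 := hsup _ h0
    have hmu : 0 < muXi S A ξ (s, a) := mu_pos_of_Xi0 S A ξ hξ (s, a)
    have hrow : 0 < rowXi S A ξ s := row_pos_of_Xi0 S A ξ hξ s
    have e1 : ((s, a, s') : S × A × S).1 = s := rfl
    congr 1
    rw [auxC, auxB]
    dsimp only
    rw [Real.log_div h0 hrow'.ne', Real.log_div hx hrow.ne',
      Real.log_div hmu'.ne' hrow'.ne', Real.log_div hmu.ne' hrow.ne']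
    ring

lemma dmc_term (ξ' ξ : S × A × S → ℝ) (hξ' : ξ' ∈ XiSet S A) (hξ : ξ ∈ Xi0Set S A)
    (hsup : ∀ z, ξ' z ≠ 0 → ξ z ≠ 0) (x y : S × A) :
    GXi S A ξ' (x, y) *
      (Real.log (GXi S A ξ' (x, y) / muXi S A ξ' x) -
        Real.log (GXi S A ξ (x, y) / muXi S A ξ x)) =
    GXi S A ξ' (x, y) * (auxC S A ξ' ξ y + auxB S A ξ' ξ (x.1, x.2, y.1)) := by
  rcases eq_or_ne (GXi S A ξ' (x, y)) 0 with h0 | h0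
  · rw [h0, zero_mul, zero_mul]
  · have hif : 0 < muXi S A ξ' y := by
      by_contra h
      rw [GXi_apply, if_neg h] at h0
      exact h0 rfl
    have hG' : GXi S A ξ' (x, y) = muXi S A ξ' y / rowXi S A ξ' y.1 * ξ' (x.1, x.2, y.1) := by
      rw [GXi_apply, if_pos hif]
    have hx' : ξ' (x.1, x.2, y.1) ≠ 0 := by
      intro h
      rw [hG', h, mul_zero] at h0
      exact h0 rfl
    have hx'pos : 0 < ξ' (x.1, x.2, y.1) := lt_of_le_of_ne (hξ'.1 _) (Ne.symm hx')
    have hrowy' : 0 < rowXi S A ξ' y.1 :=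
      lt_of_lt_of_le hx'pos (xi_le_col S A ξ' hξ' x.1 x.2 y.1)
    have hmux' : 0 < muXi S A ξ' x := by
      have := xi_le_mu S A ξ' hξ'.1 x.1 x.2 y.1
      have he : muXi S A ξ' (x.1, x.2) = muXi S A ξ' x := rfl
      linarith
    have hx0 : ξ (x.1, x.2, y.1) ≠ 0 := hsup _ hx'
    have hmuy : 0 < muXi S A ξ y := mu_pos_of_Xi0 S A ξ hξ y
    have hrowy : 0 < rowXi S A ξ y.1 := row_pos_of_Xi0 S A ξ hξ y.1
    have hmux : 0 < muXi S A ξ x := mu_pos_of_Xi0 S A ξ hξ x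
    have hG : GXi S A ξ (x, y) = muXi S A ξ y / rowXi S A ξ y.1 * ξ (x.1, x.2, y.1) := by
      rw [GXi_apply, if_pos hmuy]
    congr 1
    rw [hG', hG, auxC, auxB]
    dsimp only
    rw [Real.log_div (mul_ne_zero (div_ne_zero hif.ne' hrowy'.ne') hx') hmux'.ne',
      Real.log_mul (div_ne_zero hif.ne' hrowy'.ne') hx',
      Real.log_div hif.ne' hrowy'.ne',
      Real.log_div (mul_ne_zero (div_ne_zero hmuy.ne' hrowy.ne') hx0) hmux.ne',
      Real.log_mul (div_ne_zero hmuy.ne' hrowy.ne') hx0,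
      Real.log_div hmuy.ne' hrowy.ne']
    have he1 : muXi S A ξ' (x.1, x.2) = muXi S A ξ' x := rfl
    have he2 : muXi S A ξ (x.1, x.2) = muXi S A ξ x := rfl
    rw [he1, he2]
    ring

lemma real_eq (ξ' ξ : S × A × S → ℝ) (hξ' : ξ' ∈ XiSet S A) (hξ : ξ ∈ Xi0Set S A)
    (hsup : ∀ z, ξ' z ≠ 0 → ξ z ≠ 0) :
    (∑ z : (S × A) × (S × A), GXi S A ξ' z *
        (Real.log (GXi S A ξ' z / muXi S A ξ' z.1) -
          Real.log (GXi S A ξ z / muXi S A ξ z.1))) =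
    ∑ z : S × A × S, ξ' z *
        (Real.log (ξ' z / rowXi S A ξ' z.1) - Real.log (ξ z / rowXi S A ξ z.1)) := by
  have e2a : ∀ x : S × A, ∀ s' : S,
      (∑ a' : A, GXi S A ξ' (x, (s', a'))) = ξ' (x.1, x.2, s') := by
    intro x s'
    obtain ⟨s, a⟩ := x
    exact sum_G_fiber S A ξ' hξ' s a s'
  have E1 : (∑ z : (S × A) × (S × A), GXi S A ξ' z * auxC S A ξ' ξ z.2) =
      ∑ y : S × A, muXi S A ξ' y * auxC S A ξ' ξ y := by
    rw [Fintype.sum_prod_type, Finset.sum_comm]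
    refine Finset.sum_congr rfl fun y _ => ?_
    dsimp only
    rw [← Finset.sum_mul, sum_G_col S A ξ' hξ' y]
  have E2 : (∑ z : (S × A) × (S × A), GXi S A ξ' z * auxB S A ξ' ξ (z.1.1, z.1.2, z.2.1)) =
      ∑ z : S × A × S, ξ' z * auxB S A ξ' ξ z := by
    calc (∑ z : (S × A) × (S × A), GXi S A ξ' z * auxB S A ξ' ξ (z.1.1, z.1.2, z.2.1))
        = ∑ x : S × A, ∑ w : S × A, GXi S A ξ' (x, w) * auxB S A ξ' ξ (x.1, x.2, w.1) := by
          rw [Fintype.sum_prod_type]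
      _ = ∑ x : S × A, ∑ s' : S, ∑ a' : A,
            GXi S A ξ' (x, (s', a')) * auxB S A ξ' ξ (x.1, x.2, s') := by
          refine Finset.sum_congr rfl fun x _ => ?_
          rw [Fintype.sum_prod_type]
      _ = ∑ x : S × A, ∑ s' : S, ξ' (x.1, x.2, s') * auxB S A ξ' ξ (x.1, x.2, s') := by
          refine Finset.sum_congr rfl fun x _ => Finset.sum_congr rfl fun s' _ => ?_
          rw [← Finset.sum_mul, e2a x s']
      _ = ∑ z : S × A × S, ξ' z * auxB S A ξ' ξ z := by
          rw [Fintype.sum_prod_type]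
          conv_rhs => rw [Fintype.sum_prod_type]
          refine Finset.sum_congr rfl fun s _ => ?_
          conv_rhs => rw [Fintype.sum_prod_type]
          try rfl
  have E3 : (∑ z : S × A × S, ξ' z * auxC S A ξ' ξ (z.1, z.2.1)) =
      ∑ y : S × A, muXi S A ξ' y * auxC S A ξ' ξ y := by
    rw [Fintype.sum_prod_type]
    conv_rhs => rw [Fintype.sum_prod_type]
    refine Finset.sum_congr rfl fun s _ => ?_
    rw [Fintype.sum_prod_type]
    refine Finset.sum_congr rfl fun a _ => ?_
    dsimp only
    rw [← Finset.sum_mul]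
    try rfl
  have hmc : (∑ z : (S × A) × (S × A), GXi S A ξ' z *
        (Real.log (GXi S A ξ' z / muXi S A ξ' z.1) -
          Real.log (GXi S A ξ z / muXi S A ξ z.1))) =
      (∑ y : S × A, muXi S A ξ' y * auxC S A ξ' ξ y) +
        ∑ z : S × A × S, ξ' z * auxB S A ξ' ξ z := by
    rw [← E1, ← E2, ← Finset.sum_add_distrib]
    refine Finset.sum_congr rfl fun z _ => ?_
    obtain ⟨x, y⟩ := z
    dsimp only
    rw [dmc_term S A ξ' ξ hξ' hξ hsup x y, mul_add]
  have hmdp : (∑ z : S × A × S, ξ' z *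
        (Real.log (ξ' z / rowXi S A ξ' z.1) - Real.log (ξ z / rowXi S A ξ z.1))) =
      (∑ y : S × A, muXi S A ξ' y * auxC S A ξ' ξ y) +
        ∑ z : S × A × S, ξ' z * auxB S A ξ' ξ z := by
    rw [← E3, ← Finset.sum_add_distrib]
    refine Finset.sum_congr rfl fun z _ => ?_
    rw [dmdp_term S A ξ' ξ hξ' hξ hsup z, mul_add]
  rw [hmc, hmdp]

/-- **Relation between `D_mc` and `D_mdp`** (Proposition 2): the map `G` is a
well-defined map from `Ξ` to `Θ`, and `D_mc(G(ξ')‖G(ξ)) = D_mdp(ξ'‖ξ)` for all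
`ξ' ∈ Ξ` and `ξ ∈ Ξ₀`. -/
theorem Dmc_GXi_eq_Dmdp :
    (∀ ξ ∈ XiSet S A, GXi S A ξ ∈ ThetaSet S A) ∧
    (∀ ξ' ∈ XiSet S A, ∀ ξ ∈ Xi0Set S A,
      Dmc S A (GXi S A ξ') (GXi S A ξ) = Dmdp S A ξ' ξ) := by
  constructor
  · intro ξ hξ
    refine ⟨fun z => ?_, ?_, fun y => ?_⟩
    · obtain ⟨x, y⟩ := z
      rw [GXi_apply]
      split_ifs with h
      · exact mul_nonneg (div_nonneg (mu_nonneg S A ξ hξ.1 y) (row_nonneg S A ξ hξ.1 y.1))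
          (hξ.1 _)
      · exact le_refl 0
    · rw [Fintype.sum_prod_type]
      rw [Finset.sum_congr rfl fun x _ => sum_G_row S A ξ hξ x]
      have h2 : (∑ x : S × A, muXi S A ξ x) = ∑ z : S × A × S, ξ z := by
        rw [Fintype.sum_prod_type]
        conv_rhs => rw [Fintype.sum_prod_type]
        refine Finset.sum_congr rfl fun s _ => ?_
        conv_rhs => rw [Fintype.sum_prod_type]
        try rfl
      rw [h2, hξ.2.1]
    · rw [sum_G_col S A ξ hξ y, sum_G_row S A ξ hξ y]
  · intro ξ' hξ' ξ hξ
    by_cases hsup : ∀ z, ξ' z ≠ 0 → ξ z ≠ 0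
    · have hsupG : ∀ z : (S × A) × (S × A), GXi S A ξ' z ≠ 0 → GXi S A ξ z ≠ 0 := by
        intro z h0
        obtain ⟨x, y⟩ := z
        have hif : 0 < muXi S A ξ' y := by
          by_contra h
          rw [GXi_apply, if_neg h] at h0
          exact h0 rfl
        have hx' : ξ' (x.1, x.2, y.1) ≠ 0 := by
          intro h
          rw [GXi_apply, if_pos hif, h, mul_zero] at h0
          exact h0 rfl
        have hmuy : 0 < muXi S A ξ y := mu_pos_of_Xi0 S A ξ hξ y
        have hrowy : 0 < rowXi S A ξ y.1 := row_pos_of_Xi0 S A ξ hξ y.1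
        rw [GXi_apply, if_pos hmuy]
        exact mul_ne_zero (div_ne_zero hmuy.ne' hrowy.ne') (hsup _ hx')
      unfold Dmc Dmdp
      simp only [sum_G_row S A ξ' hξ', sum_G_row S A ξ hξ.1]
      have hA : (∑ z : (S × A) × (S × A),
          if GXi S A ξ' z = 0 then (0 : EReal) else if GXi S A ξ z = 0 then (⊤ : EReal)
          else (((GXi S A ξ' z * (Real.log (GXi S A ξ' z / muXi S A ξ' z.1) -
            Real.log (GXi S A ξ z / muXi S A ξ z.1))) : ℝ) : EReal)) =
          ((∑ z : (S × A) × (S × A), GXi S A ξ' z *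
            (Real.log (GXi S A ξ' z / muXi S A ξ' z.1) -
              Real.log (GXi S A ξ z / muXi S A ξ z.1)) : ℝ) : EReal) := by
        rw [ereal_coe_sum]
        refine Finset.sum_congr rfl fun z _ => ?_
        by_cases h0 : GXi S A ξ' z = 0
        · rw [if_pos h0, h0]
          simp
        · rw [if_neg h0, if_neg (hsupG z h0)]
      have hB : (∑ z : S × A × S,
          if ξ' z = 0 then (0 : EReal) else if ξ z = 0 then (⊤ : EReal)
          else (((ξ' z * (Real.log (ξ' z / rowXi S A ξ' z.1) -
            Real.log (ξ z / rowXi S A ξ z.1))) : ℝ) : EReal)) =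
          ((∑ z : S × A × S, ξ' z * (Real.log (ξ' z / rowXi S A ξ' z.1) -
            Real.log (ξ z / rowXi S A ξ z.1)) : ℝ) : EReal) := by
        rw [ereal_coe_sum]
        refine Finset.sum_congr rfl fun z _ => ?_
        by_cases h0 : ξ' z = 0
        · rw [if_pos h0, h0]
          simp
        · rw [if_neg h0, if_neg (hsup _ h0)]
      rw [hA, hB]
      exact EReal.coe_eq_coe_iff.mpr (real_eq S A ξ' ξ hξ' hξ hsup)
    · push_neg at hsup
      obtain ⟨z0, hz1, hz2⟩ := hsup
      obtain ⟨s, a, s'⟩ := z0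
      have hx'pos : 0 < ξ' (s, a, s') := lt_of_le_of_ne (hξ'.1 _) (Ne.symm hz1)
      have hrow' : 0 < rowXi S A ξ' s' := lt_of_lt_of_le hx'pos (xi_le_col S A ξ' hξ' s a s')
      have hex : ∃ a' : A, muXi S A ξ' (s', a') ≠ 0 := by
        by_contra h
        push_neg at h
        rw [rowXi_eq_sum_mu] at hrow'
        simp [h] at hrow'
      obtain ⟨a', ha'⟩ := hex
      have hmu' : 0 < muXi S A ξ' (s', a') :=
        lt_of_le_of_ne (mu_nonneg S A ξ' hξ'.1 _) (Ne.symm ha')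
      have hL : Dmc S A (GXi S A ξ') (GXi S A ξ) = ⊤ := by
        unfold Dmc
        refine ereal_sum_eq_top _ ?_ ((s, a), (s', a')) ?_
        · intro w
          split_ifs
          · simp
          · simp
          · exact EReal.coe_ne_bot _
        · have hG' : GXi S A ξ' ((s, a), (s', a')) ≠ 0 := by
            rw [GXi_apply, if_pos hmu']
            exact mul_ne_zero (div_ne_zero hmu'.ne' hrow'.ne') hz1
          have hG : GXi S A ξ ((s, a), (s', a')) = 0 := by
            rw [GXi_apply]
            split_ifs with h
            · show muXi S A ξ (s', a') / rowXi S A ξ s' * ξ (s, a, s') = 0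
              rw [hz2, mul_zero]
            · rfl
          rw [if_neg hG', if_pos hG]
      have hR : Dmdp S A ξ' ξ = ⊤ := by
        unfold Dmdp
        refine ereal_sum_eq_top _ ?_ (s, a, s') ?_
        · intro w
          split_ifs
          · simp
          · simp
          · exact EReal.coe_ne_bot _
        · rw [if_neg hz1, if_pos hz2]
      rw [hL, hR]

end OfflineRL
end

section
/- For every fixed exploratory evaluation policy π ∈ Π0, the distribution shift function f_π: Ξ0 → Ξ0 is continuous on Ξ0. -/
open Filter Topology MeasureTheory
open scoped Classical

namespace OfflineRL

variable (S A : Type*) [Fintype S] [Fintype A] [DecidableEq S] [DecidableEq A]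

/-! ### Auxiliary development for the continuity proof -/

open Matrix

/-- The state-action transition matrix `P((s,a),(s',a')) = π(a'|s') Q(s'|s,a)`. -/
noncomputable def Pev (π : S → A → ℝ) (ξ : S × A × S → ℝ) (x x' : S × A) : ℝ :=
  π x'.1 x'.2 * QXi S A ξ x.1 x.2 x'.1

/-- The matrix `M = I - P + E` (E all ones). -/
noncomputable def Mmat (π : S → A → ℝ) (ξ : S × A × S → ℝ) : Matrix (S × A) (S × A) ℝ :=
  fun x x' => (if x = x' then (1 : ℝ) else 0) - Pev S A π ξ x x' + 1

variable {S A}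

lemma muXi_nonneg {ξ : S × A × S → ℝ} (h : ∀ z, 0 ≤ ξ z) (x : S × A) :
    0 ≤ muXi S A ξ x :=
  Finset.sum_nonneg fun _ _ => h _

lemma muXi_pos {ξ : S × A × S → ℝ} (hξ : ξ ∈ Xi0Set S A) (x : S × A) :
    0 < muXi S A ξ x := by
  obtain ⟨⟨hnn, hsum, _⟩, hconn⟩ := hξ
  have hz : ∃ z, 0 < ξ z := by
    by_contra h
    push_neg at h
    have : (∑ z, ξ z) ≤ 0 := Finset.sum_nonpos fun z _ => h z
    linarith
  obtain ⟨z, hz⟩ := hz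
  have hzz : ξ (z.1, z.2.1, z.2.2) = ξ z := by simp
  have hy : 0 < muXi S A ξ (z.1, z.2.1) := by
    have := Finset.single_le_sum (f := fun s' => ξ (z.1, z.2.1, s'))
      (fun s' _ => hnn _) (Finset.mem_univ z.2.2)
    have : ξ z ≤ muXi S A ξ (z.1, z.2.1) := by rw [← hzz]; exact this
    linarith
  rcases (hconn x (z.1, z.2.1)).cases_head with h | ⟨w, hw, _⟩
  · rw [h]; exact hy
  · have := Finset.single_le_sum (f := fun s' => ξ (x.1, x.2, s'))
      (fun s' _ => hnn _) (Finset.mem_univ w.1)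
    exact lt_of_lt_of_le hw this

lemma QXi_nonneg {ξ : S × A × S → ℝ} (hξ : ξ ∈ Xi0Set S A) (s : S) (a : A) (s' : S) :
    0 ≤ QXi S A ξ s a s' :=
  div_nonneg (hξ.1.1 _) (muXi_nonneg hξ.1.1 (s, a))

lemma QXi_sum {ξ : S × A × S → ℝ} (hξ : ξ ∈ Xi0Set S A) (s : S) (a : A) :
    ∑ s', QXi S A ξ s a s' = 1 := by
  unfold QXi
  rw [← Finset.sum_div]
  exact div_self (muXi_pos hξ (s, a)).ne'

lemma Pev_nonneg {π : S → A → ℝ} (hπ : π ∈ policyPos S A) {ξ : S × A × S → ℝ}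
    (hξ : ξ ∈ Xi0Set S A) (x x' : S × A) : 0 ≤ Pev S A π ξ x x' :=
  mul_nonneg (hπ.2 _ _).le (QXi_nonneg hξ _ _ _)

lemma Pev_sum {π : S → A → ℝ} (hπ : π ∈ policyPos S A) {ξ : S × A × S → ℝ}
    (hξ : ξ ∈ Xi0Set S A) (x : S × A) : ∑ x' : S × A, Pev S A π ξ x x' = 1 := by
  rw [Fintype.sum_prod_type]
  have h1 : ∀ s', (∑ a', Pev S A π ξ x (s', a')) = QXi S A ξ x.1 x.2 s' := by
    intro s'
    simp only [Pev]
    rw [← Finset.sum_mul, (hπ.1 s').2, one_mul]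
  rw [Finset.sum_congr rfl fun s' _ => h1 s', QXi_sum hξ]

lemma stat_pos_of_reach {π : S → A → ℝ} (hπ : π ∈ policyPos S A) {ξ : S × A × S → ℝ}
    (hξ : ξ ∈ Xi0Set S A) {μ : S × A → ℝ} (hμ : ∀ x, 0 ≤ μ x)
    (hstat : ∀ x', μ x' = ∑ x, μ x * Pev S A π ξ x x')
    {x y : S × A} (h : Relation.ReflTransGen (fun u v : S × A => 0 < ξ (u.1, u.2, v.1)) x y)
    (hx : 0 < μ x) : 0 < μ y := by
  induction h with
  | refl => exact hx
  | tail _ hbc ih =>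
    rename_i b c _
    have hP : 0 < Pev S A π ξ b c :=
      mul_pos (hπ.2 _ _) (div_pos hbc (muXi_pos hξ (b.1, b.2)))
    have hle : μ b * Pev S A π ξ b c ≤ ∑ x, μ x * Pev S A π ξ x c :=
      Finset.single_le_sum (fun x _ => mul_nonneg (hμ x) (Pev_nonneg hπ hξ x c))
        (Finset.mem_univ b)
    have := mul_pos ih hP
    rw [hstat c]
    linarith

lemma stat_all_pos {π : S → A → ℝ} (hπ : π ∈ policyPos S A) {ξ : S × A × S → ℝ}
    (hξ : ξ ∈ Xi0Set S A) {μ : S × A → ℝ} (hμ : ∀ x, 0 ≤ μ x) (hsum : ∑ x, μ x = 1)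
    (hstat : ∀ x', μ x' = ∑ x, μ x * Pev S A π ξ x x') (y : S × A) : 0 < μ y := by
  have hex : ∃ x, 0 < μ x := by
    by_contra h
    push_neg at h
    have : (∑ x, μ x) ≤ 0 := Finset.sum_nonpos fun x _ => h x
    linarith
  obtain ⟨x, hx⟩ := hex
  exact stat_pos_of_reach hπ hξ hμ hstat (hξ.2 x y) hx

/-- Uniqueness of the stationary distribution of the irreducible chain. -/
lemma stat_unique {π : S → A → ℝ} (hπ : π ∈ policyPos S A) {ξ : S × A × S → ℝ}
    (hξ : ξ ∈ Xi0Set S A) {μ ν : S × A → ℝ}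
    (hμ : ∀ x, 0 ≤ μ x) (hμs : ∑ x, μ x = 1)
    (hμstat : ∀ x', μ x' = ∑ x, μ x * Pev S A π ξ x x')
    (hν : ∀ x, 0 ≤ ν x) (hνs : ∑ x, ν x = 1)
    (hνstat : ∀ x', ν x' = ∑ x, ν x * Pev S A π ξ x x') : μ = ν := by
  have hμp := stat_all_pos hπ hξ hμ hμs hμstat
  have hνp := stat_all_pos hπ hξ hν hνs hνstat
  have hne : Nonempty (S × A) := by
    by_contra h
    rw [not_nonempty_iff] at h
    rw [Finset.sum_of_isEmpty] at hμs
    linarith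
  have hune : (Finset.univ : Finset (S × A)).Nonempty := Finset.univ_nonempty
  obtain ⟨x₀, -, hx₀⟩ := Finset.exists_mem_eq_inf' hune (fun x => μ x / ν x)
  set c : ℝ := μ x₀ / ν x₀ with hc
  have hcle : ∀ x, c ≤ μ x / ν x := by
    intro x
    rw [← hx₀]
    exact Finset.inf'_le _ (Finset.mem_univ x)
  set w : S × A → ℝ := fun x => μ x - c * ν x with hwdef
  have hwnn : ∀ x, 0 ≤ w x := by
    intro x
    have := (le_div_iff₀ (hνp x)).1 (hcle x)
    simp only [hwdef]
    linarith [this]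
  have hwstat : ∀ x', w x' = ∑ x, w x * Pev S A π ξ x x' := by
    intro x'
    simp only [hwdef, sub_mul, mul_assoc, Finset.sum_sub_distrib, ← Finset.mul_sum,
      ← hμstat x', ← hνstat x']
  have hwx₀ : w x₀ = 0 := by
    have hν0 : ν x₀ ≠ 0 := (hνp x₀).ne'
    simp only [hwdef, hc]
    rw [div_mul_cancel₀ _ hν0, sub_self]
  have hwzero : ∀ x, w x = 0 := by
    intro x
    by_contra h
    have hxpos : 0 < w x := lt_of_le_of_ne (hwnn x) (Ne.symm h)
    have := stat_pos_of_reach hπ hξ hwnn hwstat (hξ.2 x x₀) hxpos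
    linarith
  have hc1 : c = 1 := by
    have : (∑ x, μ x) = c * ∑ x, ν x := by
      rw [Finset.mul_sum]
      refine Finset.sum_congr rfl fun x _ => ?_
      have := hwzero x
      simp only [hwdef] at this
      linarith
    rw [hμs, hνs, mul_one] at this
    linarith
  funext x
  have := hwzero x
  simp only [hwdef, hc1, one_mul] at this
  linarith

/-- The only signed stationary vector with zero sum is zero. -/
lemma stat_kernel_zero {π : S → A → ℝ} (hπ : π ∈ policyPos S A) {ξ : S × A × S → ℝ}
    (hξ : ξ ∈ Xi0Set S A) {μ : S × A → ℝ}
    (hμ : ∀ x, 0 ≤ μ x) (hμs : ∑ x, μ x = 1)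
    (hμstat : ∀ x', μ x' = ∑ x, μ x * Pev S A π ξ x x')
    {w : S × A → ℝ} (hws : ∑ x, w x = 0)
    (hwstat : ∀ x', w x' = ∑ x, w x * Pev S A π ξ x x') : w = 0 := by
  have hμp := stat_all_pos hπ hξ hμ hμs hμstat
  have hne : Nonempty (S × A) := by
    by_contra h
    rw [not_nonempty_iff] at h
    rw [Finset.sum_of_isEmpty] at hμs
    linarith
  have hune : (Finset.univ : Finset (S × A)).Nonempty := Finset.univ_nonempty
  set t : ℝ := max (Finset.univ.sup' hune (fun x => -w x / μ x)) 0 with ht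
  have htnn : 0 ≤ t := le_max_right _ _
  set v : S × A → ℝ := fun x => w x + t * μ x with hv
  have hvnn : ∀ x, 0 ≤ v x := by
    intro x
    have h1 : -w x / μ x ≤ t :=
      le_trans (Finset.le_sup' (fun x => -w x / μ x) (Finset.mem_univ x)) (le_max_left _ _)
    have := (div_le_iff₀ (hμp x)).1 h1
    simp only [hv]
    linarith
  have hvs : ∑ x, v x = t := by
    simp only [hv]
    rw [Finset.sum_add_distrib, hws, ← Finset.mul_sum, hμs]
    ring
  have hvstat : ∀ x', v x' = ∑ x, v x * Pev S A π ξ x x' := by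
    intro x'
    simp only [hv, add_mul, mul_assoc, Finset.sum_add_distrib, ← Finset.mul_sum,
      ← hwstat x', ← hμstat x']
  rcases eq_or_lt_of_le htnn with h0 | hpos
  · -- t = 0 : then w is nonnegative with zero sum, hence zero
    funext x
    have hwx : ∀ y, 0 ≤ w y := by
      intro y
      have := hvnn y
      simp only [hv, ← h0] at this
      linarith
    have := (Finset.sum_eq_zero_iff_of_nonneg (fun y _ => hwx y)).1 hws x (Finset.mem_univ x)
    simpa using this
  · -- t > 0 : v / t is a nonneg stationary distribution, so v / t = μ
    have hut : (fun x => v x / t) = μ := by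
      refine stat_unique hπ hξ (fun x => div_nonneg (hvnn x) htnn) ?_ ?_ hμ hμs hμstat
      · rw [← Finset.sum_div, hvs, div_self hpos.ne']
      · intro x'
        have hterm : ∀ x : S × A, v x / t * Pev S A π ξ x x' = v x * Pev S A π ξ x x' / t :=
          fun x => by ring
        simp only [hterm]
        rw [← Finset.sum_div, ← hvstat x']
    funext x
    have hx := congrFun hut x
    have hvx : v x = μ x * t := (div_eq_iff hpos.ne').1 hx
    simp only [hv] at hvx
    show w x = 0
    linarith

lemma vecMul_Mmat (π : S → A → ℝ) (ξ : S × A × S → ℝ) (μ : S × A → ℝ) (x' : S × A) :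
    (μ ᵥ* Mmat S A π ξ) x' = μ x' - (∑ x, μ x * Pev S A π ξ x x') + ∑ x, μ x := by
  simp only [Matrix.vecMul, dotProduct, Mmat, mul_sub, mul_add, mul_one, mul_ite,
    mul_zero, Finset.sum_add_distrib, Finset.sum_sub_distrib, Finset.sum_ite_eq']
  simp

lemma Mmat_det_ne_zero {π : S → A → ℝ} (hπ : π ∈ policyPos S A) {ξ : S × A × S → ℝ}
    (hξ : ξ ∈ Xi0Set S A) {μ : S × A → ℝ}
    (hμ : ∀ x, 0 ≤ μ x) (hμs : ∑ x, μ x = 1)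
    (hμstat : ∀ x', μ x' = ∑ x, μ x * Pev S A π ξ x x') :
    (Mmat S A π ξ).det ≠ 0 := by
  intro hdet
  obtain ⟨w, hw0, hwM⟩ := Matrix.exists_vecMul_eq_zero_iff.2 hdet
  have hkey : ∀ x', w x' - (∑ x, w x * Pev S A π ξ x x') + (∑ x, w x) = 0 := by
    intro x'
    have := congrFun hwM x'
    rwa [vecMul_Mmat] at this
  have hne : Nonempty (S × A) := by
    by_contra h
    rw [not_nonempty_iff] at h
    rw [Finset.sum_of_isEmpty] at hμs
    linarith
  have hws : ∑ x, w x = 0 := by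
    have hsum := Finset.sum_congr rfl (fun x' (_ : x' ∈ Finset.univ) => (hkey x'))
    rw [Finset.sum_const_zero, Finset.sum_add_distrib, Finset.sum_sub_distrib,
      Finset.sum_const, Finset.sum_comm] at hsum
    simp only [← Finset.mul_sum, Pev_sum hπ hξ, mul_one] at hsum
    have hcard : 0 < (Fintype.card (S × A) : ℝ) := by
      exact_mod_cast Fintype.card_pos
    simp only [Finset.card_univ, nsmul_eq_mul] at hsum
    have : (Fintype.card (S × A) : ℝ) * (∑ x, w x) = 0 := by linarith
    exact (mul_eq_zero.1 this).resolve_left hcard.ne'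
  have hwstat : ∀ x', w x' = ∑ x, w x * Pev S A π ξ x x' := by
    intro x'
    have := hkey x'
    rw [hws] at this
    linarith
  exact hw0 (stat_kernel_zero hπ hξ hμ hμs hμstat hws hwstat)

lemma mu_eq_of_stationary {π : S → A → ℝ} (hπ : π ∈ policyPos S A) {ξ : S × A × S → ℝ}
    (hξ : ξ ∈ Xi0Set S A) {μ : S × A → ℝ}
    (hμ : ∀ x, 0 ≤ μ x) (hμs : ∑ x, μ x = 1)
    (hμstat : ∀ x', μ x' = ∑ x, μ x * Pev S A π ξ x x') (x : S × A) :
    μ x = ∑ y, (Mmat S A π ξ)⁻¹ y x := by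
  have hdet := Mmat_det_ne_zero hπ hξ hμ hμs hμstat
  have hMinv : Mmat S A π ξ * (Mmat S A π ξ)⁻¹ = 1 :=
    Matrix.mul_nonsing_inv _ (isUnit_iff_ne_zero.2 hdet)
  have hμM : μ ᵥ* Mmat S A π ξ = fun _ => 1 := by
    funext x'
    rw [vecMul_Mmat, ← hμstat x', hμs]
    ring
  have : μ = (fun _ => (1 : ℝ)) ᵥ* (Mmat S A π ξ)⁻¹ := by
    calc μ = μ ᵥ* (1 : Matrix (S × A) (S × A) ℝ) := (Matrix.vecMul_one μ).symm
    _ = μ ᵥ* (Mmat S A π ξ * (Mmat S A π ξ)⁻¹) := by rw [hMinv]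
    _ = (μ ᵥ* Mmat S A π ξ) ᵥ* (Mmat S A π ξ)⁻¹ := by rw [Matrix.vecMul_vecMul]
    _ = (fun _ => (1 : ℝ)) ᵥ* (Mmat S A π ξ)⁻¹ := by rw [hμM]
  rw [this]
  simp [Matrix.vecMul, dotProduct]

lemma continuous_muXi (x : S × A) : Continuous fun ξ : S × A × S → ℝ => muXi S A ξ x :=
  continuous_finset_sum _ fun s' _ => continuous_apply _

lemma continuousOn_QXi (s : S) (a : A) (s' : S) :
    ContinuousOn (fun ξ : S × A × S → ℝ => QXi S A ξ s a s') (Xi0Set S A) :=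
  ((continuous_apply _).continuousOn).div (continuous_muXi (s, a)).continuousOn
    fun ξ hξ => (muXi_pos hξ (s, a)).ne'

lemma continuousOn_Mmat (π : S → A → ℝ) :
    ContinuousOn (fun ξ : S × A × S → ℝ => Mmat S A π ξ) (Xi0Set S A) := by
  refine continuousOn_pi.2 ?_
  intro x
  refine continuousOn_pi.2 ?_
  intro x'
  exact (continuousOn_const.sub (continuousOn_const.mul
    (continuousOn_QXi x.1 x.2 x'.1))).add continuousOn_const

lemma continuousOn_Mmat_inv (π : S → A → ℝ)
    (hdet : ∀ ξ ∈ Xi0Set S A, (Mmat S A π ξ).det ≠ 0) (y x : S × A) :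
    ContinuousOn (fun ξ : S × A × S → ℝ => (Mmat S A π ξ)⁻¹ y x) (Xi0Set S A) := by
  have heq : ∀ ξ : S × A × S → ℝ,
      (Mmat S A π ξ)⁻¹ y x = (Mmat S A π ξ).det⁻¹ * (Mmat S A π ξ).adjugate y x := by
    intro ξ
    rw [Matrix.inv_def, Ring.inverse_eq_inv]
    rfl
  simp only [heq]
  have hdetc : ContinuousOn (fun ξ : S × A × S → ℝ => (Mmat S A π ξ).det) (Xi0Set S A) :=
    (continuous_id.matrix_det).comp_continuousOn (continuousOn_Mmat π)
  have hadjc : ContinuousOn (fun ξ : S × A × S → ℝ => (Mmat S A π ξ).adjugate y x)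
      (Xi0Set S A) := by
    have : Continuous fun M : Matrix (S × A) (S × A) ℝ => M.adjugate y x :=
      (continuous_apply x).comp ((continuous_apply y).comp continuous_id.matrix_adjugate)
    exact this.comp_continuousOn (continuousOn_Mmat π)
  exact (hdetc.inv₀ hdet).mul hadjc

variable (S A)

/-- **Continuity of the distribution shift function `f_π`** (Lemma 3).
Any function `f` that maps each `ξ0 ∈ Ξ₀` to the stationary state-action-next-state
distribution of the Markov chain induced by `(π, Q(ξ0))` is continuous on `Ξ₀`. -/
theorem distribution_shift_continuous
    (π : S → A → ℝ) (hπ : π ∈ policyPos S A)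
    (f : (S × A × S → ℝ) → (S × A × S → ℝ))
    (hf : ∀ ξ0 ∈ Xi0Set S A, f ξ0 ∈ Xi0Set S A ∧ IsShift S A π ξ0 (f ξ0)) :
    ContinuousOn f (Xi0Set S A) := by
  -- the explicit continuous formula for f on Ξ₀
  set g : (S × A × S → ℝ) → (S × A × S → ℝ) := fun ξ z =>
    QXi S A ξ z.1 z.2.1 z.2.2 * ∑ y, (Mmat S A π ξ)⁻¹ y (z.1, z.2.1) with hg
  have hdet : ∀ ξ ∈ Xi0Set S A, (Mmat S A π ξ).det ≠ 0 := by
    intro ξ hξ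
    obtain ⟨-, μ, hμnn, hμs, hμstat, -⟩ := hf ξ hξ
    exact Mmat_det_ne_zero hπ hξ hμnn hμs hμstat
  have hgc : ContinuousOn g (Xi0Set S A) := by
    rw [continuousOn_pi]
    intro z
    exact (continuousOn_QXi z.1 z.2.1 z.2.2).mul
      (continuousOn_finset_sum _ fun y _ => continuousOn_Mmat_inv π hdet y (z.1, z.2.1))
  refine hgc.congr fun ξ hξ => ?_
  obtain ⟨-, μ, hμnn, hμs, hμstat, hμval⟩ := hf ξ hξ
  funext z
  have hz : f ξ z = f ξ (z.1, z.2.1, z.2.2) := by simp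
  rw [hz, hμval z.1 z.2.1 z.2.2, hg]
  rw [mu_eq_of_stationary hπ hξ hμnn hμs hμstat (z.1, z.2.1)]

end OfflineRL
end
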